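/- Two quantum operations E_1 and E_2 on ℂ^d can be unambiguously discriminated by a single use if and only if supp(E_1) is not contained in supp(E_2) and supp(E_2) is not contained in supp(E_1). -/

import Mathlib

open Matrix Kronecker
open scoped ComplexOrder

noncomputable section

/-- A quantum operation on ℂ^d given by a finite family of Kraus operators
satisfying the completeness condition. -/
structure QuantumOp (d : ℕ) where
  m : ℕ
  K : Fin m → Matrix (Fin d) (Fin d) ℂ
  complete : ∑ k, (K k)ᴴ * K k = 1

/-- The support of a quantum operation: the span of its Kraus operators. -/
def QuantumOp.supp {d : ℕ} (E : QuantumOp d) : Submodule ℂ (Matrix (Fin d) (Fin d) ℂ) :=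
  Submodule.span ℂ (Set.range E.K)

/-- The output state (E ⊗ I)(|ψ⟩⟨ψ|) = Σ_k (E^k ⊗ I)|ψ⟩⟨ψ|(E^k ⊗ I)†. -/
def QuantumOp.output {d : ℕ} (E : QuantumOp d) (da : ℕ) (ψ : Fin d × Fin da → ℂ) :
    Matrix (Fin d × Fin da) (Fin d × Fin da) ℂ :=
  ∑ k, (E.K k ⊗ₖ (1 : Matrix (Fin da) (Fin da) ℂ)) * vecMulVec ψ (star ψ) *
    (E.K k ⊗ₖ (1 : Matrix (Fin da) (Fin da) ℂ))ᴴ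

/-- States σ_1, …, σ_n are unambiguously distinguishable if there is a POVM
{Π_0, Π_1, …, Π_n} with tr(Π_i σ_j) = 0 for i ≠ j and tr(Π_i σ_i) > 0. -/
def UnambiguouslyDistinguishable {μ : Type*} [Fintype μ] [DecidableEq μ] {n : ℕ}
    (σ : Fin n → Matrix μ μ ℂ) : Prop :=
  ∃ P0 : Matrix μ μ ℂ, ∃ P : Fin n → Matrix μ μ ℂ,
    P0.PosSemidef ∧ (∀ i, (P i).PosSemidef) ∧
    (P0 + ∑ i, P i = 1) ∧
    (∀ i j, i ≠ j → (P i * σ j).trace = 0) ∧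
    (∀ i, 0 < (P i * σ i).trace)

/-- The operations E_1, …, E_n are unambiguously distinguishable by a single use. -/
def UnambigSingleUse {d n : ℕ} (E : Fin n → QuantumOp d) : Prop :=
  ∃ da : ℕ, 0 < da ∧ ∃ ψ : Fin d × Fin da → ℂ,
    star ψ ⬝ᵥ ψ = 1 ∧
    UnambiguouslyDistinguishable (fun i => (E i).output da ψ)

namespace UAux
variable {d da : ℕ}

lemma conj_mul_vecMulVec {μ : Type*} [Fintype μ] [DecidableEq μ]
    (M : Matrix μ μ ℂ) (ψ : μ → ℂ) :
    M * vecMulVec ψ (star ψ) * Mᴴ = vecMulVec (M *ᵥ ψ) (star (M *ᵥ ψ)) := by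
  rw [vecMulVec_eq Unit, vecMulVec_eq Unit, star_mulVec,
    ← Matrix.mul_assoc M, Matrix.mul_assoc (M * _), ← replicateCol_mulVec, ← replicateRow_vecMul]

lemma output_eq (E : QuantumOp d) (ψ : Fin d × Fin da → ℂ) :
    E.output da ψ = ∑ k, vecMulVec ((E.K k ⊗ₖ (1 : Matrix (Fin da) (Fin da) ℂ)) *ᵥ ψ)
      (star ((E.K k ⊗ₖ (1 : Matrix (Fin da) (Fin da) ℂ)) *ᵥ ψ)) := by
  unfold QuantumOp.output
  exact Finset.sum_congr rfl fun k _ => conj_mul_vecMulVec _ _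

lemma trace_mul_vecMulVec {μ : Type*} [Fintype μ] [DecidableEq μ]
    (P : Matrix μ μ ℂ) (a : μ → ℂ) :
    (P * vecMulVec a (star a)).trace = star a ⬝ᵥ (P *ᵥ a) := by
  simp only [Matrix.trace, Matrix.diag, Matrix.mul_apply, vecMulVec_apply, dotProduct,
    mulVec, Pi.star_apply, Finset.mul_sum]
  exact Finset.sum_congr rfl fun i _ => Finset.sum_congr rfl fun j _ => by ring

lemma trace_mul_output (E : QuantumOp d) (ψ : Fin d × Fin da → ℂ)
    (P : Matrix (Fin d × Fin da) (Fin d × Fin da) ℂ) :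
    (P * E.output da ψ).trace
      = ∑ k, star ((E.K k ⊗ₖ (1 : Matrix (Fin da) (Fin da) ℂ)) *ᵥ ψ)
          ⬝ᵥ (P *ᵥ ((E.K k ⊗ₖ (1 : Matrix (Fin da) (Fin da) ℂ)) *ᵥ ψ)) := by
  rw [output_eq, Finset.mul_sum, trace_sum]
  exact Finset.sum_congr rfl fun k _ => trace_mul_vecMulVec _ _

lemma annihilates {P : Matrix (Fin d × Fin da) (Fin d × Fin da) ℂ} (hP : P.PosSemidef)
    (E : QuantumOp d) (ψ : Fin d × Fin da → ℂ)
    (h : (P * E.output da ψ).trace = 0) :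
    ∀ A ∈ E.supp, P *ᵥ ((A ⊗ₖ (1 : Matrix (Fin da) (Fin da) ℂ)) *ᵥ ψ) = 0 := by
  rw [trace_mul_output] at h
  have hk : ∀ k, P *ᵥ ((E.K k ⊗ₖ (1 : Matrix (Fin da) (Fin da) ℂ)) *ᵥ ψ) = 0 := by
    intro k
    have h0 := (Finset.sum_eq_zero_iff_of_nonneg (fun k _ => hP.dotProduct_mulVec_nonneg _)).mp h k (Finset.mem_univ k)
    exact (hP.dotProduct_mulVec_zero_iff _).mp h0
  intro A hA
  induction hA using Submodule.span_induction with
  | mem x hx => obtain ⟨k, rfl⟩ := hx; exact hk k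
  | zero => simp
  | add x y hx hy ihx ihy =>
      rw [Matrix.add_kronecker, Matrix.add_mulVec, Matrix.mulVec_add, ihx, ihy, add_zero]
  | smul c x hx ih =>
      rw [Matrix.smul_kronecker, Matrix.smul_mulVec, Matrix.mulVec_smul, ih, smul_zero]

end UAux

namespace UAux

lemma nec {d : ℕ} {E : Fin 2 → QuantumOp d} (h : UnambigSingleUse E) {i j : Fin 2}
    (hij : i ≠ j) : ¬ (E i).supp ≤ (E j).supp := by
  intro hle
  obtain ⟨da, hda, ψ, hψ, P0, P, hP0, hP, hsum, horth, hpos⟩ := h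
  have hann := annihilates (hP i) (E j) ψ (horth i j hij)
  have hzero : (P i * (E i).output da ψ).trace = 0 := by
    rw [trace_mul_output]
    refine Finset.sum_eq_zero fun k _ => ?_
    rw [hann _ (hle (Submodule.subset_span ⟨k, rfl⟩))]
    simp
  have := hpos i
  simp only [hzero] at this
  exact lt_irrefl 0 this

end UAux

namespace UAux
variable {d : ℕ}

def mes (d : ℕ) : Fin d × Fin d → ℂ :=
  fun pq => if pq.1 = pq.2 then (((Real.sqrt d)⁻¹ : ℝ) : ℂ) else 0

lemma mes_norm (hd : 0 < d) : star (mes d) ⬝ᵥ mes d = 1 := by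
  have hd' : (0:ℝ) < d := by exact_mod_cast hd
  simp only [dotProduct, mes, Pi.star_apply, Fintype.sum_prod_type]
  simp only [apply_ite, star_zero, ite_mul, zero_mul, mul_ite, mul_zero]
  simp only [Finset.sum_ite_eq, Finset.mem_univ, if_true]
  rw [Finset.sum_const, Finset.card_univ, Fintype.card_fin]
  rw [Complex.star_def, Complex.conj_ofReal, ← Complex.ofReal_mul, ← mul_inv,
    Real.mul_self_sqrt hd'.le, nsmul_eq_mul]
  push_cast
  exact mul_inv_cancel₀ (by exact_mod_cast hd'.ne')

lemma kron_mulVec_mes (A : Matrix (Fin d) (Fin d) ℂ) (p q : Fin d) :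
    ((A ⊗ₖ (1 : Matrix (Fin d) (Fin d) ℂ)) *ᵥ mes d) (p, q)
      = (((Real.sqrt d)⁻¹ : ℝ) : ℂ) * A p q := by
  simp only [mulVec, dotProduct, Fintype.sum_prod_type, kroneckerMap_apply, one_apply, mes]
  simp only [mul_ite, mul_zero, mul_one, ite_mul, zero_mul]
  simp only [Finset.sum_ite_eq, Finset.mem_univ, if_true]
  ring

lemma inner_eq_dot (a b : EuclideanSpace ℂ (Fin d × Fin d)) :
    (inner ℂ a b : ℂ) = star (fun pq => a pq) ⬝ᵥ (fun pq => b pq) := by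
  simp [PiLp.inner_apply, dotProduct, RCLike.inner_apply, mul_comm]

def vecL (d : ℕ) : Matrix (Fin d) (Fin d) ℂ →ₗ[ℂ] EuclideanSpace ℂ (Fin d × Fin d) where
  toFun A := (WithLp.equiv 2 _).symm (fun pq => A pq.1 pq.2)
  map_add' A B := rfl
  map_smul' c A := rfl

lemma vecL_inj : Function.Injective (vecL d) := by
  intro A B h
  ext i j
  exact congrFun (congrArg (WithLp.equiv 2 _) h) (i, j)

lemma detector (Ea Eb : QuantumOp d) (hle : ¬ Ea.supp ≤ Eb.supp) :
    ∃ v : Fin d × Fin d → ℂ,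
      (∀ B ∈ Eb.supp, star (fun pq : Fin d × Fin d => B pq.1 pq.2) ⬝ᵥ v = 0) ∧
      ∃ k, star (fun pq : Fin d × Fin d => (Ea.K k) pq.1 pq.2) ⬝ᵥ v ≠ 0 := by
  have : ¬ Set.range Ea.K ⊆ (Eb.supp : Set _) := fun hs => hle (Submodule.span_le.mpr hs)
  obtain ⟨A, ⟨k₀, rfl⟩, hA⟩ := Set.not_subset.mp this
  set V : Submodule ℂ (EuclideanSpace ℂ (Fin d × Fin d)) := Eb.supp.map (vecL d) with hV
  have hu : vecL d (Ea.K k₀) ∉ V := by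
    intro hmem
    obtain ⟨B, hB, hBe⟩ := Submodule.mem_map.mp hmem
    exact hA (vecL_inj hBe ▸ hB)
  rw [← Submodule.orthogonal_orthogonal V] at hu
  rw [Submodule.mem_orthogonal] at hu
  push_neg at hu
  obtain ⟨w, hwV, hwu⟩ := hu
  refine ⟨fun pq => w pq, fun B hB => ?_, k₀, ?_⟩
  · have : (inner ℂ (vecL d B) w : ℂ) = 0 :=
      (Submodule.mem_orthogonal V w).mp hwV _ (Submodule.mem_map_of_mem hB)
    rwa [inner_eq_dot] at this
  · intro h0
    apply hwu
    have : (inner ℂ (vecL d (Ea.K k₀)) w : ℂ) = 0 := by rwa [inner_eq_dot]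
    rw [← inner_conj_symm] at this
    simpa using congrArg (starRingEnd ℂ) this

end UAux

namespace UAux
variable {d : ℕ}

lemma vecMulVec_mulVec' {μ : Type*} [Fintype μ] (a b x : μ → ℂ) :
    vecMulVec a b *ᵥ x = (b ⬝ᵥ x) • a := by
  ext i
  simp only [mulVec, dotProduct, vecMulVec_apply, Pi.smul_apply, smul_eq_mul, Finset.sum_mul]
  exact Finset.sum_congr rfl fun j _ => by ring

lemma dot_self_eq {μ : Type*} [Fintype μ] (v : μ → ℂ) :
    star v ⬝ᵥ v = ((∑ i, Complex.normSq (v i) : ℝ) : ℂ) := by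
  push_cast
  simp only [dotProduct, Pi.star_apply, Complex.star_def]
  exact Finset.sum_congr rfl fun i _ => (Complex.normSq_eq_conj_mul_self).symm ▸ rfl

lemma cs {μ : Type*} [Fintype μ] (v x : μ → ℂ) :
    Complex.normSq (star v ⬝ᵥ x)
      ≤ (∑ i, Complex.normSq (v i)) * (∑ i, Complex.normSq (x i)) := by
  set v' := (WithLp.equiv 2 (μ → ℂ)).symm v with hv'
  set x' := (WithLp.equiv 2 (μ → ℂ)).symm x with hx'
  have hin : (inner ℂ v' x' : ℂ) = star v ⬝ᵥ x := by
    simp [PiLp.inner_apply, dotProduct, RCLike.inner_apply, mul_comm, hv', hx',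
      WithLp.equiv_symm_apply, PiLp.toLp_apply]
  have h := norm_inner_le_norm (𝕜 := ℂ) v' x'
  have hnv : ‖v'‖ ^ 2 = ∑ i, Complex.normSq (v i) := by
    rw [EuclideanSpace.norm_eq, Real.sq_sqrt (Finset.sum_nonneg fun i _ => sq_nonneg _)]
    exact Finset.sum_congr rfl fun i _ => by
      simp [hv', WithLp.equiv_symm_apply, PiLp.toLp_apply, Complex.sq_norm]
  have hnx : ‖x'‖ ^ 2 = ∑ i, Complex.normSq (x i) := by
    rw [EuclideanSpace.norm_eq, Real.sq_sqrt (Finset.sum_nonneg fun i _ => sq_nonneg _)]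
    exact Finset.sum_congr rfl fun i _ => by
      simp [hx', WithLp.equiv_symm_apply, PiLp.toLp_apply, Complex.sq_norm]
  calc Complex.normSq (star v ⬝ᵥ x) = ‖(inner ℂ v' x' : ℂ)‖ ^ 2 := by
        rw [hin, Complex.sq_norm]
    _ ≤ (‖v'‖ * ‖x'‖) ^ 2 := pow_le_pow_left₀ (norm_nonneg _) h 2
    _ = _ := by rw [mul_pow, hnv, hnx]

lemma vecMulVec_star_isHermitian {μ : Type*} [Fintype μ] (v : μ → ℂ) :
    (vecMulVec v (star v)).IsHermitian := by
  ext i j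
  simp only [conjTranspose_apply, vecMulVec_apply, Pi.star_apply, star_mul', star_star]
  ring

lemma quadform_vecMulVec {μ : Type*} [Fintype μ] (v x : μ → ℂ) :
    star x ⬝ᵥ (vecMulVec v (star v) *ᵥ x)
      = ((Complex.normSq (star v ⬝ᵥ x) : ℝ) : ℂ) := by
  rw [vecMulVec_mulVec', dotProduct_smul, star_dotProduct, smul_eq_mul, Complex.star_def,
    ← Complex.normSq_eq_conj_mul_self, Complex.normSq_conj]

lemma trace_smul_vv_output (g : ℝ) (v : Fin d × Fin d → ℂ) (E : QuantumOp d) :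
    ((((g : ℂ) • vecMulVec v (star v)) * E.output d (mes d)).trace)
      = ((g * ∑ k, Complex.normSq
          (star ((E.K k ⊗ₖ (1 : Matrix (Fin d) (Fin d) ℂ)) *ᵥ mes d) ⬝ᵥ v) : ℝ) : ℂ) := by
  rw [trace_mul_output]
  push_cast
  rw [Finset.mul_sum]
  refine Finset.sum_congr rfl fun k _ => ?_
  set w := (E.K k ⊗ₖ (1 : Matrix (Fin d) (Fin d) ℂ)) *ᵥ mes d with hw
  rw [smul_mulVec, dotProduct_smul, vecMulVec_mulVec', dotProduct_smul,
    smul_eq_mul, smul_eq_mul, star_dotProduct, Complex.star_def, ← Complex.normSq_eq_conj_mul_self]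

end UAux

namespace UAux

lemma half_key (t tx : ℝ) (ht : t ≠ 0) : (2*t)⁻¹ * (t * tx) = tx / 2 := by
  field_simp

set_option maxHeartbeats 1000000 in

lemma suff {d : ℕ} (hd : 0 < d) (E₁ E₂ : QuantumOp d) (h1 : ¬ E₁.supp ≤ E₂.supp)
    (h2 : ¬ E₂.supp ≤ E₁.supp) : UnambigSingleUse ![E₁, E₂] := by
  obtain ⟨v₁, hv₁z, k₁, hk₁⟩ := detector E₁ E₂ h1
  obtain ⟨v₂, hv₂z, k₂, hk₂⟩ := detector E₂ E₁ h2
  set c : ℂ := (((Real.sqrt d)⁻¹ : ℝ) : ℂ) with hc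
  have hdpos : (0:ℝ) < d := by exact_mod_cast hd
  have hcne : c ≠ 0 := by
    rw [hc]
    exact Complex.ofReal_ne_zero.mpr (inv_ne_zero (Real.sqrt_ne_zero'.mpr hdpos))
  -- dot products against Kraus images
  have hdot : ∀ (A : Matrix (Fin d) (Fin d) ℂ) (v : Fin d × Fin d → ℂ),
      star ((A ⊗ₖ (1 : Matrix (Fin d) (Fin d) ℂ)) *ᵥ mes d) ⬝ᵥ v
        = star c * (star (fun pq : Fin d × Fin d => A pq.1 pq.2) ⬝ᵥ v) := by
    intro A v
    have hΦ : ((A ⊗ₖ (1 : Matrix (Fin d) (Fin d) ℂ)) *ᵥ mes d)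
        = fun pq : Fin d × Fin d => c * A pq.1 pq.2 := by
      funext pq
      obtain ⟨p, q⟩ := pq
      exact kron_mulVec_mes A p q
    rw [hΦ]
    simp only [dotProduct, Pi.star_apply, star_mul', Finset.mul_sum]
    exact Finset.sum_congr rfl fun i _ => by ring
  -- norms
  set t₁ : ℝ := ∑ pq, Complex.normSq (v₁ pq) with ht₁
  set t₂ : ℝ := ∑ pq, Complex.normSq (v₂ pq) with ht₂
  have hv₁ne : v₁ ≠ 0 := by
    rintro rfl
    exact hk₁ (dotProduct_zero _)
  have hv₂ne : v₂ ≠ 0 := by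
    rintro rfl
    exact hk₂ (dotProduct_zero _)
  have ht₁pos : 0 < t₁ := by
    obtain ⟨pq, hpq⟩ := Function.ne_iff.mp hv₁ne
    exact Finset.sum_pos' (fun i _ => Complex.normSq_nonneg _)
      ⟨pq, Finset.mem_univ _, Complex.normSq_pos.mpr hpq⟩
  have ht₂pos : 0 < t₂ := by
    obtain ⟨pq, hpq⟩ := Function.ne_iff.mp hv₂ne
    exact Finset.sum_pos' (fun i _ => Complex.normSq_nonneg _)
      ⟨pq, Finset.mem_univ _, Complex.normSq_pos.mpr hpq⟩
  set g₁ : ℝ := (2 * t₁)⁻¹ with hg₁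
  set g₂ : ℝ := (2 * t₂)⁻¹ with hg₂
  have hg₁pos : 0 < g₁ := by positivity
  have hg₂pos : 0 < g₂ := by positivity
  set M₁ : Matrix (Fin d × Fin d) (Fin d × Fin d) ℂ
    := (g₁ : ℂ) • vecMulVec v₁ (star v₁) with hM₁
  set M₂ : Matrix (Fin d × Fin d) (Fin d × Fin d) ℂ
    := (g₂ : ℂ) • vecMulVec v₂ (star v₂) with hM₂
  have hermM : ∀ (g : ℝ) (v : Fin d × Fin d → ℂ),
      ((g : ℂ) • vecMulVec v (star v)).IsHermitian := by
    intro g v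
    unfold Matrix.IsHermitian
    rw [conjTranspose_smul, vecMulVec_star_isHermitian v, Complex.star_def, Complex.conj_ofReal]
  have psdM : ∀ (g : ℝ), 0 ≤ g → ∀ (v : Fin d × Fin d → ℂ),
      ((g : ℂ) • vecMulVec v (star v)).PosSemidef := by
    intro g hg v
    refine PosSemidef.of_dotProduct_mulVec_nonneg (hermM g v) fun x => ?_
    rw [smul_mulVec, dotProduct_smul, quadform_vecMulVec, smul_eq_mul,
      ← Complex.ofReal_mul]
    rw [Complex.zero_le_real]
    exact mul_nonneg hg (Complex.normSq_nonneg _)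
  -- the leftover operator
  have hP0psd : ((1 : Matrix (Fin d × Fin d) (Fin d × Fin d) ℂ) - M₁ - M₂).PosSemidef := by
    apply PosSemidef.of_dotProduct_mulVec_nonneg
    · exact (Matrix.isHermitian_one.sub (hermM g₁ v₁)).sub (hermM g₂ v₂)
    · intro x
      rw [sub_mulVec, sub_mulVec, dotProduct_sub, dotProduct_sub, one_mulVec]
      rw [hM₁, hM₂, smul_mulVec, smul_mulVec, dotProduct_smul, dotProduct_smul,
        quadform_vecMulVec, quadform_vecMulVec, dot_self_eq, smul_eq_mul, smul_eq_mul,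
        ← Complex.ofReal_mul, ← Complex.ofReal_mul, ← Complex.ofReal_sub, ← Complex.ofReal_sub,
        Complex.zero_le_real]
      set tx : ℝ := ∑ i, Complex.normSq (x i) with htx
      have hcs₁ : Complex.normSq (star v₁ ⬝ᵥ x) ≤ t₁ * tx := cs v₁ x
      have hcs₂ : Complex.normSq (star v₂ ⬝ᵥ x) ≤ t₂ * tx := cs v₂ x
      have h₁ : g₁ * Complex.normSq (star v₁ ⬝ᵥ x) ≤ tx / 2 := by
        have := mul_le_mul_of_nonneg_left hcs₁ hg₁pos.le
        calc g₁ * Complex.normSq (star v₁ ⬝ᵥ x) ≤ g₁ * (t₁ * tx) := this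
          _ = tx / 2 := by rw [hg₁]; exact half_key t₁ tx ht₁pos.ne'
      have h₂ : g₂ * Complex.normSq (star v₂ ⬝ᵥ x) ≤ tx / 2 := by
        have := mul_le_mul_of_nonneg_left hcs₂ hg₂pos.le
        calc g₂ * Complex.normSq (star v₂ ⬝ᵥ x) ≤ g₂ * (t₂ * tx) := this
          _ = tx / 2 := by rw [hg₂]; exact half_key t₂ tx ht₂pos.ne'
      linarith only [h₁, h₂]
  -- zero traces
  have htr0 : ∀ (g : ℝ) (v : Fin d × Fin d → ℂ) (F : QuantumOp d),
      (∀ B ∈ F.supp, star (fun pq : Fin d × Fin d => B pq.1 pq.2) ⬝ᵥ v = 0) →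
      ((((g : ℂ) • vecMulVec v (star v)) * F.output d (mes d)).trace) = 0 := by
    intro g v F hv
    rw [trace_smul_vv_output]
    have : ∀ k : Fin F.m, Complex.normSq
        (star ((F.K k ⊗ₖ (1 : Matrix (Fin d) (Fin d) ℂ)) *ᵥ mes d) ⬝ᵥ v) = 0 := by
      intro k
      rw [hdot, hv (F.K k) (Submodule.subset_span ⟨k, rfl⟩), mul_zero]
      simp
    simp [this]
  -- positive traces
  have htrpos : ∀ (g : ℝ), 0 < g → ∀ (v : Fin d × Fin d → ℂ) (F : QuantumOp d),
      (∃ k, star (fun pq : Fin d × Fin d => (F.K k) pq.1 pq.2) ⬝ᵥ v ≠ 0) →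
      0 < ((((g : ℂ) • vecMulVec v (star v)) * F.output d (mes d)).trace) := by
    intro g hg v F hk
    rw [trace_smul_vv_output, Complex.zero_lt_real]
    obtain ⟨k, hkne⟩ := hk
    have hterm : 0 < Complex.normSq
        (star ((F.K k ⊗ₖ (1 : Matrix (Fin d) (Fin d) ℂ)) *ᵥ mes d) ⬝ᵥ v) := by
      rw [hdot]
      exact Complex.normSq_pos.mpr (mul_ne_zero (star_ne_zero.mpr hcne) hkne)
    have hsum : 0 < ∑ k, Complex.normSq
        (star ((F.K k ⊗ₖ (1 : Matrix (Fin d) (Fin d) ℂ)) *ᵥ mes d) ⬝ᵥ v) :=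
      Finset.sum_pos' (fun i _ => Complex.normSq_nonneg _) ⟨k, Finset.mem_univ _, hterm⟩
    exact mul_pos hg hsum
  -- assemble
  refine ⟨d, hd, mes d, mes_norm hd,
    (1 : Matrix (Fin d × Fin d) (Fin d × Fin d) ℂ) - M₁ - M₂, ![M₁, M₂],
    hP0psd, ?_, ?_, ?_, ?_⟩
  · intro i
    fin_cases i
    · exact psdM g₁ hg₁pos.le v₁
    · exact psdM g₂ hg₂pos.le v₂
  · simp only [Fin.sum_univ_two, Matrix.cons_val_zero, Matrix.cons_val_one, Matrix.head_cons]
    abel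
  · intro i j hij
    fin_cases i <;> fin_cases j
    · exact absurd rfl hij
    · simp only [Matrix.cons_val_zero, Matrix.cons_val_one, Matrix.head_cons, hM₁]
      exact htr0 g₁ v₁ E₂ hv₁z
    · simp only [Matrix.cons_val_zero, Matrix.cons_val_one, Matrix.head_cons, hM₂]
      exact htr0 g₂ v₂ E₁ hv₂z
    · exact absurd rfl hij
  · intro i
    fin_cases i
    · simp only [Matrix.cons_val_zero, Matrix.cons_val_one, Matrix.head_cons, hM₁]
      exact htrpos g₁ hg₁pos v₁ E₁ ⟨k₁, hk₁⟩
    · simp only [Matrix.cons_val_zero, Matrix.cons_val_one, Matrix.head_cons, hM₂]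
      exact htrpos g₂ hg₂pos v₂ E₂ ⟨k₂, hk₂⟩

end UAux


/-- two quantum operations can be unambiguously discriminated by a single
use iff neither support is contained in the other. -/
theorem two_ops_unambig_single_use_iff {d : ℕ} (hd : 0 < d) (E₁ E₂ : QuantumOp d) :
    UnambigSingleUse ![E₁, E₂] ↔
      (¬ E₁.supp ≤ E₂.supp) ∧ (¬ E₂.supp ≤ E₁.supp) := by
  constructor
  · intro h
    refine ⟨?_, ?_⟩
    · have := UAux.nec h (i := 0) (j := 1) (by decide)
      simpa using this
    · have := UAux.nec h (i := 1) (j := 0) (by decide)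
      simpa using this
  · rintro ⟨h1, h2⟩
    exact UAux.suff hd E₁ E₂ h1 h2
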